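/- Let μ ≠ ν be two distinct {0,1}-valued probability measures on a measurable space (X, B). For y ∈ {0,1} and a probability measure φ on (X, B), let φ̄_y be the probability measure on X × {0,1} with marginal φ on X and with label Y = y almost surely. Define λ_μ = (2/3)·μ̄_1 + (1/3)·μ̄_0 and λ_ν = (2/3)·ν̄_1 + (1/3)·μ̄_0. Then: (i) for every measurable classifier h : X → {0,1}, err_{λ_μ}(h) = 2/3 − (1/3)·μ({x : h(x) = 1}) ≥ 1/3; in particular the Bayes risk of λ_μ equals 1/3 and a classifier h achieves it if and only if μ({h = 1}) = 1; (ii) the Bayes risk of λ_ν equals 0, and a classifier h achieves it if and only if μ({h = 1}) = 0 and ν({h = 1}) = 1. -/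

import Mathlib

open MeasureTheory
open scoped ENNReal

/-- The measure `φ̄_y` on `X × {0,1}`: marginal `φ` on `X` and label `y` a.s. -/
noncomputable def labelWith {X : Type*} [MeasurableSpace X] (φ : Measure X) (y : Bool) :
    Measure (X × Bool) :=
  Measure.map (fun x => (x, y)) φ

/-- The mixture `λ_φ = (2/3)·φ̄_1 + (1/3)·μ̄_0`. -/
noncomputable def lamMix {X : Type*} [MeasurableSpace X] (μ φ : Measure X) :
    Measure (X × Bool) :=
  (2 / 3 : ℝ≥0∞) • labelWith φ true + (1 / 3 : ℝ≥0∞) • labelWith μ false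

/-- The error of a classifier `h` under a measure `λ` on `X × {0,1}`. -/
def errOf {X : Type*} [MeasurableSpace X] (lam : Measure (X × Bool)) (h : X → Bool) :
    ℝ≥0∞ :=
  lam {p : X × Bool | h p.1 ≠ p.2}

lemma errOf_lamMix {X : Type*} [MeasurableSpace X] (μ φ : Measure X)
    (h : X → Bool) (hm : Measurable h) :
    errOf (lamMix μ φ) h
      = (2/3 : ℝ≥0∞) * φ {x | h x = false} + (1/3 : ℝ≥0∞) * μ {x | h x = true} := by
  have hS : MeasurableSet {p : X × Bool | h p.1 ≠ p.2} := by
    have he : {p : X × Bool | h p.1 ≠ p.2}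
        = (fun p : X × Bool => (h p.1, p.2)) ⁻¹' {q : Bool × Bool | q.1 ≠ q.2} := rfl
    rw [he]
    exact ((hm.comp measurable_fst).prodMk measurable_snd) ((Set.to_countable _).measurableSet)
  simp only [errOf, lamMix, Measure.add_apply, Measure.smul_apply, smul_eq_mul, labelWith]
  rw [Measure.map_apply measurable_prodMk_right hS,
    Measure.map_apply measurable_prodMk_right hS]
  have h1 : (fun x => (x, true)) ⁻¹' {p : X × Bool | h p.1 ≠ p.2} = {x | h x = false} := by
    ext x; simp
  have h2 : (fun x => (x, false)) ⁻¹' {p : X × Bool | h p.1 ≠ p.2} = {x | h x = true} := by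
    ext x; simp
  rw [h1, h2]

lemma errOf_lamMix' {X : Type*} [MeasurableSpace X] (μ φ : Measure X)
    [IsProbabilityMeasure φ] (h : X → Bool) (hm : Measurable h) :
    errOf (lamMix μ φ) h
      = (2/3 : ℝ≥0∞) * (1 - φ {x | h x = true}) + (1/3 : ℝ≥0∞) * μ {x | h x = true} := by
  rw [errOf_lamMix μ φ h hm]
  have hA : MeasurableSet {x | h x = true} := hm (measurableSet_singleton true)
  have hc : {x | h x = false} = {x | h x = true}ᶜ := by ext x; simp
  rw [hc, measure_compl hA (measure_ne_top _ _), measure_univ]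

/-- **Bayes risks of the adversarial mixtures.** For distinct two-valued probability
measures `μ ≠ ν`: (i) every classifier has `err_{λ_μ}(h) = 2/3 − (1/3)·μ{h = 1} ≥ 1/3`;
the Bayes risk of `λ_μ` is `1/3`, achieved iff `μ{h = 1} = 1`; (ii) the Bayes risk of
`λ_ν` is `0`, achieved iff `μ{h = 1} = 0` and `ν{h = 1} = 1`. -/
theorem bayes_risk_of_mixtures {X : Type*} [MeasurableSpace X]
    (μ ν : Measure X) [IsProbabilityMeasure μ] [IsProbabilityMeasure ν]
    (hμ2 : ∀ A : Set X, MeasurableSet A → μ A = 0 ∨ μ A = 1)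
    (hν2 : ∀ A : Set X, MeasurableSet A → ν A = 0 ∨ ν A = 1)
    (hne : μ ≠ ν) :
    (∀ h : X → Bool, Measurable h →
      errOf (lamMix μ μ) h = 2 / 3 - (1 / 3) * μ {x | h x = true} ∧
      1 / 3 ≤ errOf (lamMix μ μ) h) ∧
    (⨅ (h : X → Bool) (_ : Measurable h), errOf (lamMix μ μ) h) = 1 / 3 ∧
    (∀ h : X → Bool, Measurable h →
      (errOf (lamMix μ μ) h = 1 / 3 ↔ μ {x | h x = true} = 1)) ∧
    (⨅ (h : X → Bool) (_ : Measurable h), errOf (lamMix μ ν) h) = 0 ∧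
    (∀ h : X → Bool, Measurable h →
      (errOf (lamMix μ ν) h = 0 ↔ μ {x | h x = true} = 0 ∧ ν {x | h x = true} = 1)) := by
  classical
  have sub13 : (2:ℝ≥0∞)/3 - 1/3 = 1/3 := by
    have h' : (1:ℝ≥0∞)/3 + 1/3 = 2/3 := by rw [ENNReal.div_add_div_same]; norm_num
    rw [← h', ENNReal.add_sub_cancel_right (by simp)]
  have le13 : (1:ℝ≥0∞)/3 ≤ 2/3 := by gcongr; norm_num
  have ne13 : (1:ℝ≥0∞)/3 ≠ 2/3 := by
    intro h
    have := congrArg ENNReal.toReal h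
    rw [ENNReal.toReal_div, ENNReal.toReal_div] at this
    norm_num at this
  -- part (i), pointwise
  have part1 : ∀ h : X → Bool, Measurable h →
      errOf (lamMix μ μ) h = 2 / 3 - (1 / 3) * μ {x | h x = true} ∧
      1 / 3 ≤ errOf (lamMix μ μ) h := by
    intro h hm
    have hA : MeasurableSet {x | h x = true} := hm (measurableSet_singleton true)
    rw [errOf_lamMix' μ μ h hm]
    rcases hμ2 _ hA with h0 | h1
    · rw [h0]; simpa using le13
    · rw [h1]
      simp only [tsub_self, mul_zero, zero_add, mul_one]
      exact ⟨sub13.symm, le_refl _⟩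
  refine ⟨part1, ?_, ?_, ?_, ?_⟩
  · -- Bayes risk of λ_μ
    apply le_antisymm
    · refine iInf_le_of_le (fun _ => true) (iInf_le_of_le measurable_const ?_)
      rw [errOf_lamMix' μ μ _ measurable_const]
      simp
    · exact le_iInf fun h => le_iInf fun hm => (part1 h hm).2
  · -- achievers for λ_μ
    intro h hm
    have hA : MeasurableSet {x | h x = true} := hm (measurableSet_singleton true)
    rw [errOf_lamMix' μ μ h hm]
    rcases hμ2 _ hA with h0 | h1
    · rw [h0]
      simp only [tsub_zero, mul_one, mul_zero, add_zero]
      constructor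
      · intro he; exact absurd he.symm ne13
      · intro he; exact absurd he (by norm_num)
    · rw [h1]; simp
  · -- Bayes risk of λ_ν is 0
    obtain ⟨B, hB, hμB, hνB⟩ : ∃ B, MeasurableSet B ∧ μ B = 0 ∧ ν B = 1 := by
      have hd : ∃ s, MeasurableSet s ∧ μ s ≠ ν s := by
        by_contra hc
        push_neg at hc
        exact hne (Measure.ext fun s hs => hc s hs)
      obtain ⟨s, hs, hsd⟩ := hd
      rcases hμ2 s hs with h0 | h1 <;> rcases hν2 s hs with g0 | g1
      · exact absurd (h0.trans g0.symm) hsd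
      · exact ⟨s, hs, h0, g1⟩
      · refine ⟨sᶜ, hs.compl, ?_, ?_⟩
        · rw [measure_compl hs (measure_ne_top _ _), measure_univ, h1, tsub_self]
        · rw [measure_compl hs (measure_ne_top _ _), measure_univ, g0, tsub_zero]
      · exact absurd (h1.trans g1.symm) hsd
    apply le_antisymm _ zero_le
    set hB' : X → Bool := fun x => if x ∈ B then true else false with hB'def
    have hmB : Measurable hB' := Measurable.ite hB measurable_const measurable_const
    have hset : {x | hB' x = true} = B := by
      ext x; by_cases hx : x ∈ B <;> simp [hB'def, hx]
    refine iInf_le_of_le hB' (iInf_le_of_le hmB ?_)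
    rw [errOf_lamMix' μ ν hB' hmB, hset, hμB, hνB]
    simp
  · -- achievers for λ_ν
    intro h hm
    rw [errOf_lamMix' μ ν h hm]
    constructor
    · intro he
      rw [add_eq_zero] at he
      obtain ⟨e1, e2⟩ := he
      have hμA : μ {x | h x = true} = 0 := by
        rcases mul_eq_zero.mp e2 with h' | h'
        · exact absurd h' (by simp)
        · exact h'
      have hνA : ν {x | h x = true} = 1 := by
        rcases mul_eq_zero.mp e1 with h' | h'
        · exact absurd h' (by norm_num)
        · exact le_antisymm prob_le_one (tsub_eq_zero_iff_le.mp h')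
      exact ⟨hμA, hνA⟩
    · rintro ⟨hμA, hνA⟩
      rw [hμA, hνA]
      simp
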